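/- Let n ≥ 1 and let A be a playable tournament payoff matrix of size 2n+1. Then: (a) for every k with 1 ≤ k ≤ n and every set S of k vertices, ∑_{i ∈ S} d⁺(i) ≥ k(k+1)/2 and ∑_{i ∈ S} d⁻(i) ≥ k(k+1)/2; (b) for every set S of n+1 vertices, ∑_{i ∈ S} d⁺(i) ≥ n(n+1)/2 + n and ∑_{i ∈ S} d⁻(i) ≥ n(n+1)/2 + n. Equivalently, the sum of the k smallest out-degrees (respectively in-degrees) is at least k(k+1)/2 for k ≤ n, and the sum of the n+1 smallest is at least n(n+1)/2 + n. -/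

import Mathlib

open Matrix

/-- A probability vector: nonnegative entries summing to `1`. -/
def IsProbVec {m : ℕ} (v : Fin m → ℝ) : Prop := (∀ i, 0 ≤ v i) ∧ ∑ i, v i = 1

/-- A tournament payoff matrix: zero diagonal, off-diagonal entries `±1`,
skew-symmetric. -/
def IsTournament {m : ℕ} (A : Matrix (Fin m) (Fin m) ℝ) : Prop :=
  (∀ i, A i i = 0) ∧ ∀ i j : Fin m, i ≠ j → (A i j = 1 ∨ A i j = -1) ∧ A j i = -A i j

/-- A tournament payoff matrix is playable if it admits a totally mixed symmetric Nash
equilibrium. -/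
def Playable {m : ℕ} (A : Matrix (Fin m) (Fin m) ℝ) : Prop :=
  ∃ v : Fin m → ℝ, IsProbVec v ∧ A.mulVec v = 0 ∧ ∀ i, 0 < v i

/-- The out-degree of vertex `i`: the number of vertices `i` beats. -/
noncomputable def outDeg {m : ℕ} (A : Matrix (Fin m) (Fin m) ℝ) (i : Fin m) : ℕ :=
  (Finset.univ.filter fun j => A i j = 1).card

/-- The in-degree of vertex `i`: the number of vertices beating `i`. -/
noncomputable def inDeg {m : ℕ} (A : Matrix (Fin m) (Fin m) ℝ) (i : Fin m) : ℕ :=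
  (Finset.univ.filter fun j => A i j = -1).card

open Finset

section Aux

variable {m : ℕ} {A : Matrix (Fin m) (Fin m) ℝ} {v : Fin m → ℝ}

lemma flip_iff (hA : IsTournament A) (i j : Fin m) : A j i = 1 ↔ A i j = -1 := by
  rcases eq_or_ne i j with rfl | h
  · rw [hA.1 i]; norm_num
  · have h2 := (hA.2 i j h).2
    constructor
    · intro hji; rcases (hA.2 i j h).1 with h1 | h1
      · rw [h1] at h2; rw [h2] at hji; norm_num at hji
      · exact h1
    · intro hij; rw [h2, hij]; norm_num

lemma bal (hA : IsTournament A) (hAv : A.mulVec v = 0) (i : Fin m) :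
    ∑ j ∈ univ.filter (fun j => A i j = 1), v j
      = ∑ j ∈ univ.filter (fun j => A i j = -1), v j := by
  have h := congrFun hAv i
  simp only [mulVec, dotProduct, Pi.zero_apply] at h
  have key : ∀ j, A i j * v j
      = (if A i j = 1 then v j else 0) - (if A i j = -1 then v j else 0) := by
    intro j
    rcases eq_or_ne j i with rfl | hne
    · rw [hA.1 j]; norm_num
    · rcases (hA.2 i j (Ne.symm hne)).1 with h1 | h1 <;> rw [h1] <;> norm_num
  rw [Finset.sum_congr rfl (fun j _ => key j), Finset.sum_sub_distrib] at h
  rw [Finset.sum_filter, Finset.sum_filter]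
  linarith

lemma partition (hA : IsTournament A) (v : Fin m → ℝ) (i : Fin m) :
    v i + ∑ j ∈ univ.filter (fun j => A i j = 1), v j
        + ∑ j ∈ univ.filter (fun j => A i j = -1), v j = ∑ j, v j := by
  rw [Finset.sum_filter, Finset.sum_filter]
  have key : ∀ j, (if j = i then v j else 0) + (if A i j = 1 then v j else 0)
      + (if A i j = -1 then v j else 0) = v j := by
    intro j
    rcases eq_or_ne j i with rfl | hne
    · rw [hA.1 j]; norm_num
    · rcases (hA.2 i j (Ne.symm hne)).1 with h1 | h1 <;> rw [h1] <;> norm_num [hne]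
  calc v i + (∑ j, if A i j = 1 then v j else 0) + (∑ j, if A i j = -1 then v j else 0)
      = ∑ j, ((if j = i then v j else 0) + (if A i j = 1 then v j else 0)
      + (if A i j = -1 then v j else 0)) := by
        rw [Finset.sum_add_distrib, Finset.sum_add_distrib, Finset.sum_ite_eq' univ i v]
        simp
    _ = ∑ j, v j := Finset.sum_congr rfl (fun j _ => key j)

lemma half_lt (hA : IsTournament A) (hprob : IsProbVec v) (hAv : A.mulVec v = 0)
    (hpos : ∀ i, 0 < v i) (i : Fin m) :
    ∑ j ∈ univ.filter (fun j => A i j = -1), v j < 1/2 := by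
  have h1 := partition hA v i
  have h2 := bal hA hAv i
  have h3 := hprob.2
  have := hpos i
  linarith

lemma cut (hA : IsTournament A) (hprob : IsProbVec v) (hAv : A.mulVec v = 0)
    (hpos : ∀ i, 0 < v i) (S : Finset (Fin m))
    (h1 : ∑ i ∈ S, (Sᶜ.filter fun j => A i j = 1).card < S.card)
    (h2 : ∑ i ∈ S, (Sᶜ.filter fun j => A i j = 1).card < Sᶜ.card) : False := by
  have hex : ∃ i ∈ S, (Sᶜ.filter fun j => A i j = 1) = ∅ := by
    by_contra hcon
    push_neg at hcon
    have : S.card ≤ ∑ i ∈ S, (Sᶜ.filter fun j => A i j = 1).card := by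
      calc S.card = ∑ i ∈ S, 1 := by simp
        _ ≤ _ := Finset.sum_le_sum fun i hi =>
            Finset.card_pos.2 (hcon i hi)
    omega
  obtain ⟨i, hiS, hiempty⟩ := hex
  have hsubI : Sᶜ ⊆ univ.filter fun j => A i j = -1 := by
    intro j hj
    simp only [Finset.mem_filter, Finset.mem_univ, true_and]
    have hne : i ≠ j := by
      intro h; rw [h] at hiS; exact (Finset.mem_compl.1 hj) hiS
    rcases (hA.2 i j hne).1 with ha | ha
    · exact absurd (Finset.mem_filter.2 ⟨hj, ha⟩)
        (by rw [hiempty]; exact Finset.notMem_empty j)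
    · exact ha
  have hw1 : ∑ j ∈ Sᶜ, v j < 1/2 :=
    lt_of_le_of_lt
      (Finset.sum_le_sum_of_subset_of_nonneg hsubI (fun j _ _ => le_of_lt (hpos j)))
      (half_lt hA hprob hAv hpos i)
  set J := Sᶜ.filter (fun j => ∃ i ∈ S, A i j = 1) with hJ
  have hJcard : J.card ≤ ∑ i ∈ S, (Sᶜ.filter fun j => A i j = 1).card := by
    refine le_trans (Finset.card_le_card ?_) Finset.card_biUnion_le
    intro j hj
    rw [hJ, Finset.mem_filter] at hj
    obtain ⟨hjc, i', hi', ha⟩ := hj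
    exact Finset.mem_biUnion.2 ⟨i', hi', Finset.mem_filter.2 ⟨hjc, ha⟩⟩
  have hnotsub : ¬ (Sᶜ ⊆ J) := fun hsub => by
    have := Finset.card_le_card hsub; omega
  obtain ⟨j, hjc, hjJ⟩ := Finset.not_subset.1 hnotsub
  have hsubO : S ⊆ univ.filter fun a => A j a = 1 := by
    intro a haS
    simp only [Finset.mem_filter, Finset.mem_univ, true_and]
    have hne : a ≠ j := fun h => (Finset.mem_compl.1 hjc) (h ▸ haS)
    rcases (hA.2 j a hne.symm).1 with ha | ha
    · exact ha
    · exfalso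
      have haj : A a j = 1 := by
        have h2' := (hA.2 j a hne.symm).2; rw [ha] at h2'; rw [h2']; norm_num
      exact hjJ (by rw [hJ]; exact Finset.mem_filter.2 ⟨hjc, ⟨a, haS, haj⟩⟩)
  have hw2 : ∑ a ∈ S, v a < 1/2 := by
    have h := Finset.sum_le_sum_of_subset_of_nonneg hsubO (fun a _ _ => le_of_lt (hpos a))
    rw [bal hA hAv j] at h
    exact lt_of_le_of_lt h (half_lt hA hprob hAv hpos j)
  have hall := Finset.sum_add_sum_compl S v
  rw [hprob.2] at hall
  linarith

lemma swap_sum (hA : IsTournament A) (S T : Finset (Fin m)) :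
    ∑ i ∈ S, (T.filter fun j => A i j = -1).card
      = ∑ j ∈ T, (S.filter fun i => A j i = 1).card := by
  simp only [Finset.card_filter]
  rw [Finset.sum_comm]
  refine Finset.sum_congr rfl fun j _ => Finset.sum_congr rfl fun i _ => ?_
  exact if_congr (flip_iff hA i j).symm rfl rfl

lemma inner_eq (hA : IsTournament A) (S : Finset (Fin m)) :
    ∑ i ∈ S, (S.filter fun j => A i j = 1).card
      = ∑ i ∈ S, (S.filter fun j => A i j = -1).card :=
  (swap_sum hA S S).symm

lemma inner_add (hA : IsTournament A) (S : Finset (Fin m)) :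
    ∑ i ∈ S, (S.filter fun j => A i j = 1).card
      + ∑ i ∈ S, (S.filter fun j => A i j = -1).card = S.card * (S.card - 1) := by
  rw [← Finset.sum_add_distrib]
  have key : ∀ i ∈ S, (S.filter fun j => A i j = 1).card
      + (S.filter fun j => A i j = -1).card = S.card - 1 := by
    intro i hi
    have hdisj : Disjoint (S.filter fun j => A i j = 1) (S.filter fun j => A i j = -1) := by
      rw [Finset.disjoint_left]
      intro j hj1 hj2
      have e1 := (Finset.mem_filter.1 hj1).2
      have e2 := (Finset.mem_filter.1 hj2).2
      rw [e1] at e2; norm_num at e2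
    have hunion : (S.filter fun j => A i j = 1) ∪ (S.filter fun j => A i j = -1)
        = S.erase i := by
      ext j
      simp only [Finset.mem_union, Finset.mem_filter, Finset.mem_erase]
      constructor
      · rintro (⟨hjS, ha⟩ | ⟨hjS, ha⟩) <;> refine ⟨?_, hjS⟩ <;> rintro rfl <;>
          rw [hA.1 j] at ha <;> norm_num at ha
      · rintro ⟨hne, hjS⟩
        rcases (hA.2 i j (Ne.symm hne)).1 with ha | ha
        · exact Or.inl ⟨hjS, ha⟩
        · exact Or.inr ⟨hjS, ha⟩
    rw [← Finset.card_union_of_disjoint hdisj, hunion, Finset.card_erase_of_mem hi]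
  rw [Finset.sum_congr rfl key, Finset.sum_const, smul_eq_mul]

lemma out_split (S : Finset (Fin m)) (i : Fin m) :
    outDeg A i = (S.filter fun j => A i j = 1).card
      + (Sᶜ.filter fun j => A i j = 1).card := by
  unfold outDeg
  simp only [Finset.card_filter]
  exact (Finset.sum_add_sum_compl S _).symm

lemma in_split (S : Finset (Fin m)) (i : Fin m) :
    inDeg A i = (S.filter fun j => A i j = -1).card
      + (Sᶜ.filter fun j => A i j = -1).card := by
  unfold inDeg
  simp only [Finset.card_filter]
  exact (Finset.sum_add_sum_compl S _).symm

end Aux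

open Finset in
/-- Degree-sum lower bounds for playable `(2n+1)`-tournaments: every set of `k ≤ n`
vertices has out-degree (and in-degree) sum at least `k(k+1)/2`, and every set of
`n+1` vertices has out-degree (and in-degree) sum at least `n(n+1)/2 + n`. -/
theorem playable_degree_sum_bounds (n : ℕ) (hn : 1 ≤ n)
    (A : Matrix (Fin (2 * n + 1)) (Fin (2 * n + 1)) ℝ)
    (hA : IsTournament A) (hplay : Playable A) :
    (∀ k : ℕ, 1 ≤ k → k ≤ n → ∀ S : Finset (Fin (2 * n + 1)), S.card = k →
      k * (k + 1) / 2 ≤ ∑ i ∈ S, outDeg A i ∧ k * (k + 1) / 2 ≤ ∑ i ∈ S, inDeg A i) ∧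
    (∀ S : Finset (Fin (2 * n + 1)), S.card = n + 1 →
      n * (n + 1) / 2 + n ≤ ∑ i ∈ S, outDeg A i ∧
      n * (n + 1) / 2 + n ≤ ∑ i ∈ S, inDeg A i) := by

  obtain ⟨v, hprob, hAv, hpos⟩ := hplay
  -- cut bounds in both directions
  have cutmin : ∀ S : Finset (Fin (2 * n + 1)),
      min S.card Sᶜ.card ≤ ∑ i ∈ S, (Sᶜ.filter fun j => A i j = 1).card := by
    intro S
    by_contra hcon
    push_neg at hcon
    exact cut hA hprob hAv hpos S (lt_of_lt_of_le hcon (min_le_left _ _))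
      (lt_of_lt_of_le hcon (min_le_right _ _))
  have cutmin' : ∀ S : Finset (Fin (2 * n + 1)),
      min S.card Sᶜ.card ≤ ∑ i ∈ S, (Sᶜ.filter fun j => A i j = -1).card := by
    intro S
    rw [swap_sum hA S Sᶜ, min_comm]
    have h := cutmin Sᶜ
    rwa [compl_compl] at h
  -- degree sum identities
  have degsum_out : ∀ S : Finset (Fin (2 * n + 1)), 2 * ∑ i ∈ S, outDeg A i
      = S.card * (S.card - 1) + 2 * ∑ i ∈ S, (Sᶜ.filter fun j => A i j = 1).card := by
    intro S
    have h1 : ∑ i ∈ S, outDeg A i = ∑ i ∈ S, (S.filter fun j => A i j = 1).card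
        + ∑ i ∈ S, (Sᶜ.filter fun j => A i j = 1).card := by
      rw [← Finset.sum_add_distrib]
      exact Finset.sum_congr rfl fun i _ => out_split S i
    have h2 := inner_add hA S
    have h3 := inner_eq hA S
    set a := ∑ i ∈ S, (S.filter fun j => A i j = 1).card with ha
    set b := ∑ i ∈ S, (S.filter fun j => A i j = -1).card with hb
    set c := ∑ i ∈ S, (Sᶜ.filter fun j => A i j = 1).card with hc
    set K := S.card * (S.card - 1) with hK
    omega
  have degsum_in : ∀ S : Finset (Fin (2 * n + 1)), 2 * ∑ i ∈ S, inDeg A i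
      = S.card * (S.card - 1) + 2 * ∑ i ∈ S, (Sᶜ.filter fun j => A i j = -1).card := by
    intro S
    have h1 : ∑ i ∈ S, inDeg A i = ∑ i ∈ S, (S.filter fun j => A i j = -1).card
        + ∑ i ∈ S, (Sᶜ.filter fun j => A i j = -1).card := by
      rw [← Finset.sum_add_distrib]
      exact Finset.sum_congr rfl fun i _ => in_split S i
    have h2 := inner_add hA S
    have h3 := inner_eq hA S
    set a := ∑ i ∈ S, (S.filter fun j => A i j = 1).card with ha
    set b := ∑ i ∈ S, (S.filter fun j => A i j = -1).card with hb
    set c := ∑ i ∈ S, (Sᶜ.filter fun j => A i j = -1).card with hc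
    set K := S.card * (S.card - 1) with hK
    omega
  have hcardc : ∀ S : Finset (Fin (2 * n + 1)), Sᶜ.card = 2 * n + 1 - S.card := by
    intro S
    rw [Finset.card_compl, Fintype.card_fin]
  constructor
  · intro k hk1 hkn S hScard
    have hKrel : k * (k + 1) = k * (k - 1) + 2 * k := by
      rcases Nat.exists_eq_add_of_le hk1 with ⟨j, rfl⟩
      simp only [Nat.add_sub_cancel_left]
      ring
    obtain ⟨c0, hc0⟩ : Even (k * (k + 1)) := Nat.even_mul_succ_self k
    have hcc : Sᶜ.card = 2 * n + 1 - k := by rw [hcardc, hScard]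
    constructor
    · have hcut := cutmin S
      have hds := degsum_out S
      rw [hScard] at hds
      rw [hScard, hcc] at hcut
      set s := ∑ i ∈ S, outDeg A i with hs
      set t := ∑ i ∈ S, (Sᶜ.filter fun j => A i j = 1).card with ht
      set K1 := k * (k - 1) with hK1
      rw [hc0] at hKrel ⊢
      omega
    · have hcut := cutmin' S
      have hds := degsum_in S
      rw [hScard] at hds
      rw [hScard, hcc] at hcut
      set s := ∑ i ∈ S, inDeg A i with hs
      set t := ∑ i ∈ S, (Sᶜ.filter fun j => A i j = -1).card with ht
      set K1 := k * (k - 1) with hK1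
      rw [hc0] at hKrel ⊢
      omega
  · intro S hScard
    have hKrel : (n + 1) * ((n + 1) - 1) = n * (n + 1) := by
      rw [Nat.add_sub_cancel, mul_comm]
    obtain ⟨c0, hc0⟩ : Even (n * (n + 1)) := (Nat.even_mul_succ_self n)
    have hcc : Sᶜ.card = n := by rw [hcardc, hScard]; omega
    constructor
    · have hcut := cutmin S
      have hds := degsum_out S
      rw [hScard] at hds
      rw [hScard, hcc] at hcut
      rw [hKrel, hc0] at hds
      rw [hc0]
      set s := ∑ i ∈ S, outDeg A i with hs
      set t := ∑ i ∈ S, (Sᶜ.filter fun j => A i j = 1).card with ht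
      omega
    · have hcut := cutmin' S
      have hds := degsum_in S
      rw [hScard] at hds
      rw [hScard, hcc] at hcut
      rw [hKrel, hc0] at hds
      rw [hc0]
      set s := ∑ i ∈ S, inDeg A i with hs
      set t := ∑ i ∈ S, (Sᶜ.filter fun j => A i j = -1).card with ht
      omega
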